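/- Let M ∈ ℝ, x₀ < x₁, and let b : [x₀, x₁] → ℝ be continuous with b(t) ≤ M for all t ∈ [x₀, x₁]. Suppose q, r : [x₀, x₁] → ℝ are differentiable with q'(t) = t − (q(t) + b(t))² and r'(t) = t − (r(t) + M)² for all t ∈ [x₀, x₁], that q(x₀) ≤ r(x₀), and that r(t) ≤ −M for all t ∈ [x₀, x₁]. Then q(t) ≤ r(t) for all t ∈ [x₀, x₁]; in particular the paths never cross. -/

import Mathlib

open Set

/-- ODE comparison (no crossing): if `q' = t − (q+b)²` with `b ≤ M`,
`r' = t − (r+M)²` with `r ≤ −M` on `[x₀,x₁]`, and `q(x₀) ≤ r(x₀)`, then `q ≤ r` on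
`[x₀,x₁]`. -/
theorem stmt_14 (M x₀ x₁ : ℝ) (hx : x₀ < x₁) (b q r : ℝ → ℝ)
    (hb : ContinuousOn b (Icc x₀ x₁)) (hbM : ∀ t ∈ Icc x₀ x₁, b t ≤ M)
    (hq : ∀ t ∈ Icc x₀ x₁, HasDerivWithinAt q (t - (q t + b t) ^ 2) (Icc x₀ x₁) t)
    (hr : ∀ t ∈ Icc x₀ x₁, HasDerivWithinAt r (t - (r t + M) ^ 2) (Icc x₀ x₁) t)
    (h0 : q x₀ ≤ r x₀) (hrM : ∀ t ∈ Icc x₀ x₁, r t ≤ -M) :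
    ∀ t ∈ Icc x₀ x₁, q t ≤ r t := by
  have hqc : ContinuousOn q (Icc x₀ x₁) := fun t ht => (hq t ht).continuousWithinAt
  have hrc : ContinuousOn r (Icc x₀ x₁) := fun t ht => (hr t ht).continuousWithinAt
  -- bound |r + M| on the interval
  obtain ⟨C, hC⟩ := isCompact_Icc.exists_bound_of_continuousOn
    (hrc.add continuousOn_const : ContinuousOn (fun t => r t + M) (Icc x₀ x₁))
  have hCx : x₀ ∈ Icc x₀ x₁ := ⟨le_refl _, hx.le⟩
  have hC0 : 0 ≤ C := le_trans (norm_nonneg _) (hC x₀ hCx)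
  set K : ℝ := 2 * C + 1 with hK
  have hK0 : 0 < K := by positivity
  set E₁ : ℝ := Real.exp (K * (x₁ - x₀)) with hE₁
  have hE₁0 : 0 < E₁ := Real.exp_pos _
  -- key estimate with a small exponential correction
  have key : ∀ ε : ℝ, 0 < ε → ε * E₁ ≤ K →
      ∀ t ∈ Icc x₀ x₁, q t ≤ r t + ε * Real.exp (K * (t - x₀)) := by
    intro ε hε hεK
    have hBderiv : ∀ x ∈ Ico x₀ x₁,
        HasDerivWithinAt (fun t => r t + ε * Real.exp (K * (t - x₀)))
          (x - (r x + M) ^ 2 + ε * (Real.exp (K * (x - x₀)) * K)) (Ici x) x := by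
      intro x hx'
      have h1 : HasDerivWithinAt r (x - (r x + M) ^ 2) (Ici x) x :=
        (hr x (Ico_subset_Icc_self hx')).mono_of_mem_nhdsWithin (Icc_mem_nhdsGE_of_mem hx')
      have h2 : HasDerivAt (fun t : ℝ => Real.exp (K * (t - x₀)))
          (Real.exp (K * (x - x₀)) * (K * 1)) x :=
        (((hasDerivAt_id x).sub_const x₀).const_mul K).exp
      exact (h1.add ((h2.const_mul ε).hasDerivWithinAt)).congr_deriv (by ring)
    have hqderiv : ∀ x ∈ Ico x₀ x₁,
        HasDerivWithinAt q (x - (q x + b x) ^ 2) (Ici x) x := fun x hx' =>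
      (hq x (Ico_subset_Icc_self hx')).mono_of_mem_nhdsWithin (Icc_mem_nhdsGE_of_mem hx')
    have bound : ∀ x ∈ Ico x₀ x₁, q x = r x + ε * Real.exp (K * (x - x₀)) →
        x - (q x + b x) ^ 2 < x - (r x + M) ^ 2 + ε * (Real.exp (K * (x - x₀)) * K) := by
      intro x hx' heq
      have hxI : x ∈ Icc x₀ x₁ := Ico_subset_Icc_self hx'
      set E : ℝ := Real.exp (K * (x - x₀)) with hE
      have hE0 : 0 < E := Real.exp_pos _
      have hEE₁ : E ≤ E₁ := Real.exp_le_exp.2 (by nlinarith [hx'.2.le, hx'.1])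
      set δ : ℝ := ε * E with hδ
      have hδ0 : 0 < δ := by positivity
      have hδK : δ ≤ K := le_trans (by nlinarith) hεK
      set c : ℝ := r x + M with hc
      have hcC : |c| ≤ C := by simpa using hC x hxI
      have hc0 : c ≤ 0 := by have := hrM x hxI; simp [hc]; linarith
      have hcC' : -c ≤ C := by rw [abs_le] at hcC; linarith [hcC.1]
      have hqb : q x + b x ≤ c + δ := by
        have hb' := hbM x hxI
        rw [heq]; rw [hc]; linarith
      have hδK' : ε * (Real.exp (K * (x - x₀)) * K) = δ * K := by
        rw [hδ, hE]; ring
      have hmain : c ^ 2 - (q x + b x) ^ 2 < δ * K := by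
        by_cases hcase : c + δ ≤ 0
        · have hsq : (c + δ) ^ 2 ≤ (q x + b x) ^ 2 := by nlinarith
          nlinarith
        · push_neg at hcase
          have : c ^ 2 < δ ^ 2 := by nlinarith
          nlinarith [sq_nonneg (q x + b x), hδK, hδ0]
      have hcc : c ^ 2 = (r x + M) ^ 2 := by rw [hc]
      linarith [hmain, hδK', hcc]
    have ha : q x₀ ≤ r x₀ + ε * Real.exp (K * (x₀ - x₀)) := by
      nlinarith [Real.exp_pos (K * (x₀ - x₀))]
    intro t ht
    have hBcont : ContinuousOn (fun t => r t + ε * Real.exp (K * (t - x₀))) (Icc x₀ x₁) := by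
      apply hrc.add
      exact (continuous_const.mul (Real.continuous_exp.comp
        (continuous_const.mul (continuous_id.sub continuous_const)))).continuousOn
    exact image_le_of_deriv_right_lt_deriv_boundary' hqc hqderiv ha hBcont hBderiv bound ht
  -- pass to the limit ε → 0
  intro t ht
  refine le_of_forall_pos_le_add fun δ hδ => ?_
  set ε : ℝ := min (δ / E₁) (K / E₁) with hε
  have hε0 : 0 < ε := lt_min (by positivity) (by positivity)
  have hεK : ε * E₁ ≤ K := by
    rw [← le_div_iff₀ hE₁0]; exact min_le_right _ _
  have h1 := key ε hε0 hεK t ht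
  have hEt : Real.exp (K * (t - x₀)) ≤ E₁ :=
    Real.exp_le_exp.2 (by nlinarith [ht.1, ht.2])
  have : ε * Real.exp (K * (t - x₀)) ≤ δ := by
    calc ε * Real.exp (K * (t - x₀)) ≤ ε * E₁ :=
          mul_le_mul_of_nonneg_left hEt hε0.le
    _ ≤ (δ / E₁) * E₁ := mul_le_mul_of_nonneg_right (min_le_left _ _) hE₁0.le
    _ = δ := div_mul_cancel₀ _ hE₁0.ne'
  linarith
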